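/- Suppose (θ_n)_{n≥1} is a BMM sequence with Euclidean proximal surrogates, i.e. g_n^i(θ) = f_n^i(θ) + (λ_n/2)‖θ − θ_{n−1}^i‖² for all n, i, where L_f ≤ λ_n ≤ Λ for a fixed constant Λ < ∞, and assume Σ_{n≥1} Δ_n < ∞. Then there is a constant C > 0, depending only on m, L_f and Λ, such that for every n ≥ 2: min_{1≤k≤n} S(θ_k) ≤ C·( f(θ_0) − f* + 1 + Σ_{j=1}^∞ Δ_j )·(log n)/√n. In particular the stationarity measure along the iterates decays at rate Õ(n^{−1/2}), which yields worst-case iteration complexity O(ε^{−2}(log ε^{−2})²) for reaching an ε-stationary point. -/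

import Mathlib

set_option maxHeartbeats 4000000

open Filter RealInnerProductSpace

universe u

/-- The point of the product space whose first `i-1` blocks are those of `θ n`, whose
`i`-th block is `v`, and whose remaining blocks are those of `θ (n-1)`.  Thus the `i`-th
marginal objective at cycle `n` is `fun v => f (mixPt θ n i v)`, and the Euclidean proximal
surrogate is `fun v => f (mixPt θ n i v) + (λ_n/2) ‖v - θ (n-1) i‖²`. -/
def mixPt {m : ℕ} {X : Fin m → Type*} (θ : ℕ → ∀ i, X i) (n : ℕ) (i : Fin m)
    (v : X i) : ∀ j, X j :=
  Function.update (fun j => if (j : ℕ) < (i : ℕ) then θ n j else θ (n - 1) j) i v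

/-- The `i`-th block partial gradient `∇_i f(x)`: the gradient at `x i` of the map
`u ↦ f (x with i-th block replaced by u)`. -/
noncomputable def gradi {m : ℕ} {E : Fin m → Type*} [∀ i, NormedAddCommGroup (E i)]
    [∀ i, InnerProductSpace ℝ (E i)] [∀ i, CompleteSpace (E i)]
    (f : (∀ i, E i) → ℝ) (x : ∀ i, E i) (i : Fin m) : E i :=
  gradient (fun u => f (Function.update x i u)) (x i)

/-- The stationarity measure
`S(x) = ∑_i sup { ⟪-∇_i f(x), u⟫ : ‖u‖ ≤ 1, x i + u ∈ Θ i }`. -/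
noncomputable def Smeasure {m : ℕ} {E : Fin m → Type*} [∀ i, NormedAddCommGroup (E i)]
    [∀ i, InnerProductSpace ℝ (E i)] [∀ i, CompleteSpace (E i)]
    (f : (∀ i, E i) → ℝ) (Θ : ∀ i, Set (E i)) (x : ∀ i, E i) : ℝ :=
  ∑ i, sSup ((fun u => ⟪-gradi f x i, u⟫) '' {u : E i | ‖u‖ ≤ 1 ∧ x i + u ∈ Θ i})

section BMMhelpers

variable {F : Type*} [NormedAddCommGroup F] [InnerProductSpace ℝ F] [CompleteSpace F]

private lemma bmm_hasDerivAt_line (f : F → ℝ) (hf : Differentiable ℝ f) (x u : F) (t : ℝ) :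
    HasDerivAt (fun s : ℝ => f (x + s • u)) ⟪gradient f (x + t • u), u⟫ t := by
  have h1 : HasDerivAt (fun s : ℝ => x + s • u) u t := by
    simpa using ((hasDerivAt_id t).smul_const u).const_add x
  have h2 := (hf (x + t • u)).hasGradientAt
  rw [hasGradientAt_iff_hasFDerivAt] at h2
  have h3 := h2.comp_hasDerivAt t h1
  rw [InnerProductSpace.toDual_apply_apply] at h3
  exact h3

private lemma bmm_descent_lemma (f : F → ℝ) (hf : Differentiable ℝ f) (L : ℝ)
    (hlip : ∀ w w' : F, ‖gradient f w - gradient f w'‖ ≤ L * ‖w - w'‖) (x u : F) :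
    f (x + u) ≤ f x + ⟪gradient f x, u⟫ + L / 2 * ‖u‖ ^ 2 := by
  set ψ : ℝ → ℝ := fun t => f (x + t • u) - t * ⟪gradient f x, u⟫ - L / 2 * t ^ 2 * ‖u‖ ^ 2 with hψ
  have key : ∀ t : ℝ, HasDerivAt ψ
      (⟪gradient f (x + t • u), u⟫ - ⟪gradient f x, u⟫ - L * t * ‖u‖ ^ 2) t := by
    intro t
    have h1 := bmm_hasDerivAt_line f hf x u t
    have h2 : HasDerivAt (fun t : ℝ => t * ⟪gradient f x, u⟫) ⟪gradient f x, u⟫ t := by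
      simpa using (hasDerivAt_id t).mul_const _
    have h3 : HasDerivAt (fun t : ℝ => L / 2 * t ^ 2 * ‖u‖ ^ 2) (L * t * ‖u‖ ^ 2) t := by
      have := ((hasDerivAt_pow 2 t).const_mul (L / 2)).mul_const (‖u‖ ^ 2)
      exact this.congr_deriv (by rw [show (2:ℕ) - 1 = 1 from rfl]; push_cast; ring)
    exact (h1.sub h2).sub h3
  have mono : AntitoneOn ψ (Set.Icc 0 1) := by
    apply antitoneOn_of_deriv_nonpos (convex_Icc 0 1)
    · exact continuousOn_of_forall_continuousAt fun t _ => (key t).continuousAt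
    · intro t ht
      exact (key t).differentiableAt.differentiableWithinAt
    · intro t ht
      rw [interior_Icc] at ht
      rw [(key t).deriv]
      have hcs : ⟪gradient f (x + t • u) - gradient f x, u⟫
          ≤ ‖gradient f (x + t • u) - gradient f x‖ * ‖u‖ := real_inner_le_norm _ _
      have hl : ‖gradient f (x + t • u) - gradient f x‖ ≤ L * (t * ‖u‖) := by
        have := hlip (x + t • u) x
        simpa [norm_smul, abs_of_pos ht.1] using this
      rw [inner_sub_left] at hcs
      nlinarith [norm_nonneg u, norm_nonneg (gradient f (x + t • u) - gradient f x), ht.1.le,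
        mul_le_mul_of_nonneg_right hl (norm_nonneg u)]
  have h01 : ψ 1 ≤ ψ 0 := mono (Set.mem_Icc.2 ⟨le_refl 0, zero_le_one⟩)
    (Set.mem_Icc.2 ⟨zero_le_one, le_refl 1⟩) zero_le_one
  simp only [hψ, one_smul, zero_smul, add_zero, one_pow, one_mul, zero_pow, mul_zero,
    zero_mul, sub_zero] at h01
  linarith

end BMMhelpers

/-- iteration complexity of BMM with Euclidean proximal surrogates.
There is a constant `C > 0` depending only on `m`, `L_f` and `Λ` such that for any BMM
sequence with proximal surrogates `g_n^i(θ) = f_n^i(θ) + (λ_n/2)‖θ - θ_{n-1}^i‖²`,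
`L_f ≤ λ_n ≤ Λ`, and summable optimality gaps, for every `n ≥ 2`:
`min_{1≤k≤n} S(θ_k) ≤ C (f(θ_0) - f* + 1 + ∑_j Δ_j) (log n)/√n`. -/
theorem bmm_proximal_complexity (m : ℕ) (hm : 1 ≤ m) (Lf Λbd : ℝ) (hLf : 0 < Lf) :
    ∃ C : ℝ, 0 < C ∧
      ∀ (E : Fin m → Type u)
        [∀ i, NormedAddCommGroup (E i)] [∀ i, InnerProductSpace ℝ (E i)]
        [∀ i, FiniteDimensional ℝ (E i)]
        (Θ : ∀ i, Set (E i)),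
        (∀ i, (Θ i).Nonempty) → (∀ i, IsClosed (Θ i)) → (∀ i, Convex ℝ (Θ i)) →
        ∀ f : (∀ i, E i) → ℝ, Differentiable ℝ f →
        (∀ x y : ∀ i, E i,
          Real.sqrt (∑ i, ‖gradi f x i - gradi f y i‖ ^ 2)
            ≤ Lf * Real.sqrt (∑ i, ‖x i - y i‖ ^ 2)) →
        ∀ fstar : ℝ, (∀ x, fstar ≤ f x) →
        ∀ θ : ℕ → ∀ i, E i, (∀ n i, θ n i ∈ Θ i) →
        ∀ lam : ℕ → ℝ, (∀ n, 1 ≤ n → Lf ≤ lam n ∧ lam n ≤ Λbd) →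
        ∀ Δ : ℕ → ℝ, (∀ n, 1 ≤ n → 0 ≤ Δ n) → (Summable fun n => Δ (n + 1)) →
        (∀ n, 1 ≤ n → ∀ i, ∀ v ∈ Θ i,
          f (mixPt θ n i (θ n i)) + lam n / 2 * ‖θ n i - θ (n - 1) i‖ ^ 2
            ≤ f (mixPt θ n i v) + lam n / 2 * ‖v - θ (n - 1) i‖ ^ 2 + Δ n) →
        ∀ n : ℕ, ∀ hn : 2 ≤ n,
          (Finset.Icc 1 n).inf'
              ⟨1, Finset.mem_Icc.mpr ⟨le_refl 1, le_trans one_le_two hn⟩⟩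
              (fun k => Smeasure f Θ (θ k))
            ≤ C * (f (θ 0) - fstar + 1 + ∑' j, Δ (j + 1)) * Real.log n / Real.sqrt n := by
  have hm' : (1 : ℝ) ≤ (m : ℝ) := by exact_mod_cast hm
  set Λ' : ℝ := |Λbd| + Lf with hΛ'def
  have hΛ' : 0 < Λ' := by rw [hΛ'def]; positivity
  clear_value Λ'
  set A : ℝ := Lf + Λ' with hAdef
  have hA : 0 < A := by rw [hAdef]; positivity
  clear_value A
  set C₀ : ℝ := (m : ℝ) * (A / 2 + 1 + A * ((m : ℝ) / Lf + 1)) with hC₀def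
  have hC₀ : 0 < C₀ := by
    rw [hC₀def]
    have h1 : (0 : ℝ) < A / 2 + 1 + A * ((m : ℝ) / Lf + 1) := by positivity
    nlinarith
  clear_value C₀
  refine ⟨C₀ / Real.log 2, div_pos hC₀ (Real.log_pos one_lt_two), ?_⟩
  intro E _ _ _ Θ hΘne hΘcl hΘcx f hfdiff hflip fstar hfstar θ hθ lam hlam Δ hΔ0 hΔsum hopt n hn
  -- basic quantities
  set SΔ : ℝ := ∑' j, Δ (j + 1) with hSΔdef
  have hSΔ0 : 0 ≤ SΔ := by
    rw [hSΔdef]; exact tsum_nonneg fun j => hΔ0 (j + 1) (Nat.le_add_left 1 j)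
  clear_value SΔ
  set V : ℝ := f (θ 0) - fstar + 1 + SΔ with hVdef
  clear_value V
  have hV1 : 1 ≤ V := by
    have := hfstar (θ 0); rw [hVdef]; linarith
  have hΛlam : ∀ k, 1 ≤ k → 0 ≤ lam k ∧ lam k ≤ Λ' := by
    intro k hk
    refine ⟨le_trans hLf.le (hlam k hk).1, le_trans (hlam k hk).2 ?_⟩
    rw [hΛ'def]
    have := le_abs_self Λbd
    linarith
  have hΔIcc : ∀ N : ℕ, ∑ k ∈ Finset.Icc 1 N, Δ k ≤ SΔ := by
    intro N
    rw [← Finset.Ico_add_one_right_eq_Icc, Finset.sum_Ico_eq_sum_range]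
    have hc : ∀ j ∈ Finset.range (N + 1 - 1), Δ (1 + j) = Δ (j + 1) := by
      intro j _; rw [add_comm]
    rw [Finset.sum_congr rfl hc, hSΔdef]
    exact Summable.sum_le_tsum (Finset.range (N + 1 - 1))
      (fun j _ => hΔ0 (j + 1) (Nat.le_add_left 1 j)) hΔsum
  -- sufficient decrease (key1)
  have key1 : ∀ k, 1 ≤ k →
      f (θ k) + Lf / 2 * ∑ i, ‖θ k i - θ (k - 1) i‖ ^ 2 ≤ f (θ (k - 1)) + m * Δ k := by
    intro k hk
    set Q : ℕ → ℝ := fun a => f (fun l => if (l : ℕ) < a then θ k l else θ (k - 1) l) with hQ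
    have hmixlo : ∀ i : Fin m, f (mixPt θ k i (θ (k - 1) i)) = Q i := by
      intro i
      have h0 : (fun j : Fin m => if (j : ℕ) < (i : ℕ) then θ k j else θ (k - 1) j) i
          = θ (k - 1) i := by simp
      rw [mixPt, ← h0, Function.update_eq_self]
    have hmixhi : ∀ i : Fin m, f (mixPt θ k i (θ k i)) = Q ((i : ℕ) + 1) := by
      intro i
      rw [mixPt]
      congr 1
      funext j
      by_cases hji : j = i
      · subst hji; rw [Function.update_self]; rw [if_pos (by omega)]
      · have hne : (j : ℕ) ≠ (i : ℕ) := fun h => hji (Fin.ext h)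
        rw [Function.update_of_ne hji]
        by_cases hlt : (j : ℕ) < (i : ℕ)
        · rw [if_pos hlt, if_pos (by omega)]
        · rw [if_neg hlt, if_neg (by omega)]
    have step : ∀ i : Fin m, Q ((i : ℕ) + 1) - Q i + Lf / 2 * ‖θ k i - θ (k - 1) i‖ ^ 2 ≤ Δ k := by
      intro i
      have h := hopt k hk i (θ (k - 1) i) (hθ (k - 1) i)
      rw [hmixhi i, hmixlo i] at h
      simp only [sub_self, norm_zero] at h
      have hlam' := (hlam k hk).1
      nlinarith [sq_nonneg ‖θ k i - θ (k - 1) i‖]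
    have tele : ∑ i : Fin m, (Q ((i : ℕ) + 1) - Q (i : ℕ)) = Q m - Q 0 := by
      rw [Fin.sum_univ_eq_sum_range (fun a => Q (a + 1) - Q a) m]
      exact Finset.sum_range_sub Q m
    have hQm : Q m = f (θ k) := by
      show f _ = f (θ k)
      congr 1; funext l; exact if_pos l.isLt
    have hQ0 : Q 0 = f (θ (k - 1)) := by
      show f _ = f (θ (k - 1))
      congr 1
    have sum_step := Finset.sum_le_sum (fun i (_ : i ∈ Finset.univ) => step i)
    rw [Finset.sum_add_distrib, tele, hQm, hQ0, ← Finset.mul_sum, Finset.sum_const,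
      Finset.card_univ, Fintype.card_fin, nsmul_eq_mul] at sum_step
    linarith
  -- summed decrease (key2)
  set R : ℝ := f (θ 0) - fstar + m * SΔ with hRdef
  clear_value R
  have hR0 : 0 ≤ R := by
    have := hfstar (θ 0)
    have hmS : 0 ≤ (m : ℝ) * SΔ := mul_nonneg (by linarith) hSΔ0
    rw [hRdef]; linarith
  have key2 : ∀ N : ℕ,
      Lf / 2 * ∑ k ∈ Finset.Icc 1 N, (∑ i, ‖θ k i - θ (k - 1) i‖ ^ 2) ≤ R := by
    intro N
    have tele2 : ∑ k ∈ Finset.Icc 1 N, (f (θ (k - 1)) - f (θ k)) = f (θ 0) - f (θ N) := by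
      rw [← Finset.Ico_add_one_right_eq_Icc, Finset.sum_Ico_eq_sum_range]
      have hc : ∀ j ∈ Finset.range (N + 1 - 1),
          f (θ (1 + j - 1)) - f (θ (1 + j)) = f (θ j) - f (θ (j + 1)) := by
        intro j _
        rw [show 1 + j - 1 = j by omega, show 1 + j = j + 1 by omega]
      rw [Finset.sum_congr rfl hc, Finset.sum_range_sub' (fun j => f (θ j)) (N + 1 - 1)]
      norm_num
    have h1 : ∀ k ∈ Finset.Icc 1 N, Lf / 2 * (∑ i, ‖θ k i - θ (k - 1) i‖ ^ 2)
        ≤ (f (θ (k - 1)) - f (θ k)) + m * Δ k := by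
      intro k hk
      have := key1 k (Finset.mem_Icc.mp hk).1
      linarith
    have h2 := Finset.sum_le_sum h1
    rw [Finset.mul_sum]
    refine le_trans h2 ?_
    rw [Finset.sum_add_distrib, tele2, ← Finset.mul_sum]
    have h3 := hΔIcc N
    have h4 := hfstar (θ N)
    have hm0 : (0 : ℝ) ≤ m := Nat.cast_nonneg m
    have h5 := mul_le_mul_of_nonneg_left h3 hm0
    rw [hRdef]
    linarith
  -- per-iterate stationarity bound (key3)
  have hupdate_diff : ∀ (x : ∀ j, E j) (i : Fin m),
      Differentiable ℝ (fun v : E i => f (Function.update x i v)) := fun x i v =>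
    DifferentiableAt.comp v (hfdiff _) ((hasFDerivAt_update x v).differentiableAt)
  have hgradi_eq : ∀ (x : ∀ j, E j) (i : Fin m) (w : E i),
      gradient (fun v => f (Function.update x i v)) w = gradi f (Function.update x i w) i := by
    intro x i w
    have h1 : (fun v => f (Function.update (Function.update x i w) i v))
        = fun v => f (Function.update x i v) := by
      funext v; rw [Function.update_idem]
    rw [gradi, h1, Function.update_self]
  have hblock_lip : ∀ (x y : ∀ j, E j) (i : Fin m),
      ‖gradi f x i - gradi f y i‖ ≤ Lf * Real.sqrt (∑ j, ‖x j - y j‖ ^ 2) := by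
    intro x y i
    refine le_trans ?_ (hflip x y)
    rw [show ‖gradi f x i - gradi f y i‖ = Real.sqrt (‖gradi f x i - gradi f y i‖ ^ 2) from
      (Real.sqrt_sq (norm_nonneg _)).symm]
    exact Real.sqrt_le_sqrt (Finset.single_le_sum
      (f := fun j => ‖gradi f x j - gradi f y j‖ ^ 2) (fun j _ => sq_nonneg _)
      (Finset.mem_univ i))
  have hupd_norm : ∀ (x : ∀ j, E j) (i : Fin m) (w w' : E i),
      (∑ j, ‖Function.update x i w j - Function.update x i w' j‖ ^ 2) = ‖w - w'‖ ^ 2 := by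
    intro x i w w'
    rw [Finset.sum_eq_single i]
    · rw [Function.update_self, Function.update_self]
    · intro j _ hji
      rw [Function.update_of_ne hji, Function.update_of_ne hji]
      simp
    · exact fun h => absurd (Finset.mem_univ i) h
  have key3 : ∀ k, 1 ≤ k → ∀ t : ℝ, 0 < t → t ≤ 1 →
      Smeasure f Θ (θ k) ≤ m * (A * t / 2 + Δ k / t
        + A * Real.sqrt (∑ i, ‖θ k i - θ (k - 1) i‖ ^ 2)) := by
    intro k hk t ht ht1
    set d : Fin m → ℝ := fun i => ‖θ k i - θ (k - 1) i‖ with hd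
    set D : ℝ := Real.sqrt (∑ i, d i ^ 2) with hD
    have hDk : 0 ≤ D := Real.sqrt_nonneg _
    have hΔk := hΔ0 k hk
    have hlamk := hΛlam k hk
    have hdD : ∀ i, d i ≤ D := by
      intro i
      rw [show d i = Real.sqrt (d i ^ 2) from (Real.sqrt_sq (norm_nonneg _)).symm]
      exact Real.sqrt_le_sqrt (Finset.single_le_sum (f := fun j => d j ^ 2)
        (fun j _ => sq_nonneg _) (Finset.mem_univ i))
    have bound_i : ∀ i : Fin m,
        sSup ((fun u => ⟪-gradi f (θ k) i, u⟫) '' {u : E i | ‖u‖ ≤ 1 ∧ θ k i + u ∈ Θ i})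
          ≤ A * t / 2 + Δ k / t + Lf * D + Λ' * d i := by
      intro i
      have hKnn : (0:ℝ) ≤ A * t / 2 + Δ k / t + Lf * D + Λ' * d i := by
        have h1 : (0:ℝ) ≤ A * t / 2 := by positivity
        have h2 : (0:ℝ) ≤ Δ k / t := div_nonneg hΔk ht.le
        have h3 : (0:ℝ) ≤ Lf * D := mul_nonneg hLf.le hDk
        have h4 : (0:ℝ) ≤ Λ' * d i := mul_nonneg hΛ'.le (norm_nonneg _)
        linarith
      apply Real.sSup_le _ hKnn
      rintro y ⟨u, ⟨hu1, hu2⟩, rfl⟩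
      show ⟪-gradi f (θ k) i, u⟫ ≤ _
      set base : ∀ j, E j := fun j : Fin m => if (j : ℕ) < (i : ℕ) then θ k j else θ (k - 1) j
        with hbase
      set x : ∀ j, E j := Function.update base i (θ k i) with hx
      set h : E i → ℝ := fun w => f (Function.update base i w) with hh
      have hhdiff : Differentiable ℝ h := hupdate_diff base i
      have hhgrad : ∀ w, gradient h w = gradi f (Function.update base i w) i := hgradi_eq base i
      have hhlip : ∀ w w', ‖gradient h w - gradient h w'‖ ≤ Lf * ‖w - w'‖ := by
        intro w w'
        rw [hhgrad w, hhgrad w']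
        refine le_trans (hblock_lip _ _ i) ?_
        rw [hupd_norm base i w w', Real.sqrt_sq (norm_nonneg _)]
      set g : E i := gradi f x i with hg
      have hdesc := bmm_descent_lemma h hhdiff Lf hhlip (θ k i) (t • u)
      have hvmem : θ k i + t • u ∈ Θ i := by
        have hc := hΘcx i (hθ k i) hu2 (by linarith : (0:ℝ) ≤ 1 - t) ht.le (by ring)
        convert hc using 1
        rw [smul_add]
        module
      have hop := hopt k hk i (θ k i + t • u) hvmem
      have hmix1 : mixPt θ k i (θ k i) = x := rfl
      have hmix2 : f (mixPt θ k i (θ k i + t • u)) = h (θ k i + t • u) := rfl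
      rw [hmix1, hmix2] at hop
      have hexp : ‖θ k i + t • u - θ (k - 1) i‖ ^ 2
          = ‖θ k i - θ (k - 1) i‖ ^ 2 + 2 * (t * ⟪θ k i - θ (k - 1) i, u⟫)
            + t ^ 2 * ‖u‖ ^ 2 := by
        rw [add_sub_right_comm, norm_add_sq_real, real_inner_smul_right, norm_smul,
          Real.norm_eq_abs, mul_pow, sq_abs]
      have hgeq : gradient h (θ k i) = g := by
        rw [hhgrad (θ k i)]
      rw [hgeq] at hdesc
      have htu : ‖t • u‖ ^ 2 = t ^ 2 * ‖u‖ ^ 2 := by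
        rw [norm_smul, Real.norm_eq_abs, mul_pow, sq_abs]
      rw [real_inner_smul_right, htu] at hdesc
      have hfx : h (θ k i) = f x := by
        rw [hh]
      rw [hfx] at hdesc
      have hmain : -(⟪g, u⟫ + lam k * ⟪θ k i - θ (k - 1) i, u⟫)
          ≤ (Lf + lam k) / 2 * t * ‖u‖ ^ 2 + Δ k / t := by
        have hdt : Δ k / t * t = Δ k := div_mul_cancel₀ _ ht.ne'
        nlinarith [hop, hdesc, hexp, ht, mul_pos ht ht]
      have herr1 : ⟪g - gradi f (θ k) i, u⟫ ≤ Lf * D := by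
        have e1 : ⟪g - gradi f (θ k) i, u⟫ ≤ ‖g - gradi f (θ k) i‖ * ‖u‖ :=
          real_inner_le_norm _ _
        have e2 : ‖g - gradi f (θ k) i‖ * ‖u‖ ≤ ‖g - gradi f (θ k) i‖ :=
          mul_le_of_le_one_right (norm_nonneg _) hu1
        have e3 : ‖g - gradi f (θ k) i‖ ≤ Lf * Real.sqrt (∑ j, ‖x j - θ k j‖ ^ 2) :=
          hblock_lip x (θ k) i
        have e4 : Real.sqrt (∑ j, ‖x j - θ k j‖ ^ 2) ≤ D := by
          apply Real.sqrt_le_sqrt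
          apply Finset.sum_le_sum
          intro j _
          by_cases hji : j = i
          · subst hji
            rw [hx, Function.update_self, sub_self, norm_zero]
            simpa using sq_nonneg (d j)
          · simp only [hx, Function.update_of_ne hji, hbase]
            by_cases hlt : (j : ℕ) < (i : ℕ)
            · rw [if_pos hlt, sub_self, norm_zero]
              simpa using sq_nonneg (d j)
            · rw [if_neg hlt, norm_sub_rev]
        linarith [mul_le_mul_of_nonneg_left e4 hLf.le]
      have herr2 : lam k * ⟪θ k i - θ (k - 1) i, u⟫ ≤ Λ' * d i := by
        have e1 : ⟪θ k i - θ (k - 1) i, u⟫ ≤ d i := by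
          refine le_trans (real_inner_le_norm _ _) ?_
          rw [hd]
          exact mul_le_of_le_one_right (norm_nonneg _) hu1
        calc lam k * ⟪θ k i - θ (k - 1) i, u⟫ ≤ lam k * d i :=
              mul_le_mul_of_nonneg_left e1 hlamk.1
          _ ≤ Λ' * d i := mul_le_mul_of_nonneg_right hlamk.2 (norm_nonneg _)
      have hsplit : ⟪-gradi f (θ k) i, u⟫
          = -(⟪g, u⟫ + lam k * ⟪θ k i - θ (k - 1) i, u⟫) + ⟪g - gradi f (θ k) i, u⟫
            + lam k * ⟪θ k i - θ (k - 1) i, u⟫ := by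
        have hs2 : ⟪g - gradi f (θ k) i, u⟫ = ⟪g, u⟫ - ⟪gradi f (θ k) i, u⟫ :=
          inner_sub_left _ _ _
        rw [inner_neg_left, hs2]
        ring
      have hquad : (Lf + lam k) / 2 * t * ‖u‖ ^ 2 ≤ A * t / 2 := by
        have hu2' : ‖u‖ ^ 2 ≤ 1 := by nlinarith [norm_nonneg u]
        have h0 : (0:ℝ) ≤ (Lf + lam k) / 2 * t := mul_nonneg (by linarith [hlamk.1]) ht.le
        have e1 := mul_le_mul_of_nonneg_left hu2' h0
        have e2 : (Lf + lam k) / 2 * t ≤ (Lf + Λ') / 2 * t := by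
          nlinarith [mul_le_mul_of_nonneg_right hlamk.2 ht.le]
        rw [hAdef]
        linarith [e1, e2]
      rw [hsplit]
      linarith
    rw [Smeasure]
    calc ∑ i, sSup ((fun u => ⟪-gradi f (θ k) i, u⟫) '' {u : E i | ‖u‖ ≤ 1 ∧ θ k i + u ∈ Θ i})
        ≤ ∑ i : Fin m, (A * t / 2 + Δ k / t + Lf * D + Λ' * d i) :=
          Finset.sum_le_sum fun i _ => bound_i i
      _ ≤ ∑ i : Fin m, (A * t / 2 + Δ k / t + Lf * D + Λ' * D) := by
          apply Finset.sum_le_sum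
          intro i _
          have := mul_le_mul_of_nonneg_left (hdD i) hΛ'.le
          linarith
      _ = m * (A * t / 2 + Δ k / t + A * D) := by
          rw [Finset.sum_const, Finset.card_univ, Fintype.card_fin, nsmul_eq_mul, hAdef]
          ring
  -- assembly
  set s : ℝ := Real.sqrt n with hsdef
  have hn1 : (1 : ℝ) ≤ (n : ℝ) := by exact_mod_cast le_trans one_le_two hn
  have hs1 : 1 ≤ s := by
    rw [hsdef, show (1:ℝ) = Real.sqrt 1 from Real.sqrt_one.symm]
    exact Real.sqrt_le_sqrt hn1
  have hs0 : 0 < s := lt_of_lt_of_le one_pos hs1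
  have hss : s * s = n := by rw [hsdef]; exact Real.mul_self_sqrt (Nat.cast_nonneg n)
  clear_value s
  set t : ℝ := 1 / s with htdef
  have ht : 0 < t := by rw [htdef]; positivity
  have ht1 : t ≤ 1 := by rw [htdef, div_le_one hs0]; exact hs1
  clear_value t
  set B' : ℝ := 2 / Lf * R with hB'def
  have hB'0 : 0 ≤ B' := by rw [hB'def]; exact mul_nonneg (by positivity) hR0
  clear_value B'
  set Dk : ℕ → ℝ := fun k => Real.sqrt (∑ i, ‖θ k i - θ (k - 1) i‖ ^ 2) with hDkdef
  have hDk0 : ∀ k, 0 ≤ Dk k := by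
    intro k; rw [hDkdef]; exact Real.sqrt_nonneg _
  have hDk2 : ∀ k, Dk k ^ 2 = ∑ i, ‖θ k i - θ (k - 1) i‖ ^ 2 := by
    intro k; rw [hDkdef]
    exact Real.sq_sqrt (Finset.sum_nonneg fun i _ => sq_nonneg _)
  have hDkk : ∀ k, Dk k = Real.sqrt (∑ i, ‖θ k i - θ (k - 1) i‖ ^ 2) := by
    intro k; rw [hDkdef]
  clear_value Dk
  have hd2sum : ∑ k ∈ Finset.Icc 1 n, (∑ i, ‖θ k i - θ (k - 1) i‖ ^ 2) ≤ B' := by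
    have h1 := key2 n
    have h2 := mul_le_mul_of_nonneg_left h1 (le_of_lt (div_pos two_pos hLf))
    have h3 : 2 / Lf * (Lf / 2 * ∑ k ∈ Finset.Icc 1 n, (∑ i, ‖θ k i - θ (k - 1) i‖ ^ 2))
        = ∑ k ∈ Finset.Icc 1 n, (∑ i, ‖θ k i - θ (k - 1) i‖ ^ 2) := by
      field_simp
    rw [h3] at h2
    rw [hB'def]
    exact h2
  have hDsum : ∑ k ∈ Finset.Icc 1 n, Dk k ≤ s * Real.sqrt B' := by
    have hcard : (Finset.Icc 1 n).card = n := by rw [Nat.card_Icc]; omega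
    have h1 : (∑ k ∈ Finset.Icc 1 n, Dk k) ^ 2 ≤ (n : ℝ) * ∑ k ∈ Finset.Icc 1 n, Dk k ^ 2 := by
      have := sq_sum_le_card_mul_sum_sq (s := Finset.Icc 1 n) (f := Dk)
      rwa [hcard] at this
    have h2 : ∑ k ∈ Finset.Icc 1 n, Dk k ^ 2
        = ∑ k ∈ Finset.Icc 1 n, (∑ i, ‖θ k i - θ (k - 1) i‖ ^ 2) :=
      Finset.sum_congr rfl fun k _ => hDk2 k
    have h3 : (∑ k ∈ Finset.Icc 1 n, Dk k) ^ 2 ≤ (s * Real.sqrt B') ^ 2 := by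
      have h4 : (s * Real.sqrt B') ^ 2 = (n : ℝ) * B' := by
        rw [mul_pow, Real.sq_sqrt hB'0, ← hss]
        ring
      rw [h4]
      calc (∑ k ∈ Finset.Icc 1 n, Dk k) ^ 2
          ≤ (n : ℝ) * ∑ k ∈ Finset.Icc 1 n, Dk k ^ 2 := h1
        _ ≤ (n : ℝ) * B' := by
            rw [h2]
            exact mul_le_mul_of_nonneg_left hd2sum (by positivity)
    have h5 : 0 ≤ ∑ k ∈ Finset.Icc 1 n, Dk k := Finset.sum_nonneg fun k _ => hDk0 k
    have h6 : 0 ≤ s * Real.sqrt B' := mul_nonneg hs0.le (Real.sqrt_nonneg _)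
    nlinarith [h3, h5, h6]
  -- sum of the stationarity measures
  have hsumS : ∑ k ∈ Finset.Icc 1 n, Smeasure f Θ (θ k)
      ≤ (n : ℝ) * ((m : ℝ) * (A * t / 2)) + ((m : ℝ) / t) * SΔ
        + ((m : ℝ) * A) * (s * Real.sqrt B') := by
    have h1 : ∀ k ∈ Finset.Icc 1 n, Smeasure f Θ (θ k)
        ≤ (m : ℝ) * (A * t / 2 + Δ k / t + A * Dk k) := by
      intro k hk
      have := key3 k (Finset.mem_Icc.mp hk).1 t ht ht1
      rwa [← hDkk k] at this
    have h2 := Finset.sum_le_sum h1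
    refine le_trans h2 ?_
    have h3 : ∀ k, (m : ℝ) * (A * t / 2 + Δ k / t + A * Dk k)
        = (m : ℝ) * (A * t / 2) + ((m : ℝ) / t) * Δ k + ((m : ℝ) * A) * Dk k := by
      intro k; ring
    have hcard : (Finset.Icc 1 n).card = n := by rw [Nat.card_Icc]; omega
    have h4 : ∑ k ∈ Finset.Icc 1 n, ((m : ℝ) * (A * t / 2 + Δ k / t + A * Dk k))
        = (n : ℝ) * ((m : ℝ) * (A * t / 2)) + ((m : ℝ) / t) * (∑ k ∈ Finset.Icc 1 n, Δ k)
          + ((m : ℝ) * A) * (∑ k ∈ Finset.Icc 1 n, Dk k) := by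
      rw [Finset.sum_congr rfl fun k _ => h3 k, Finset.sum_add_distrib, Finset.sum_add_distrib,
        Finset.sum_const, ← Finset.mul_sum, ← Finset.mul_sum, hcard, nsmul_eq_mul]
    rw [h4]
    have e1 := mul_le_mul_of_nonneg_left (hΔIcc n) (le_of_lt (div_pos (by linarith : (0:ℝ) < (m:ℝ)) ht))
    have e2 := mul_le_mul_of_nonneg_left hDsum
      (mul_nonneg (by linarith : (0:ℝ) ≤ (m:ℝ)) hA.le)
    linarith
  -- from sum to min
  set I : ℝ := (Finset.Icc 1 n).inf'
      ⟨1, Finset.mem_Icc.mpr ⟨le_refl 1, le_trans one_le_two hn⟩⟩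
      (fun k => Smeasure f Θ (θ k)) with hIdef
  have hinf : (n : ℝ) * I ≤ ∑ k ∈ Finset.Icc 1 n, Smeasure f Θ (θ k) := by
    rw [hIdef]
    have := Finset.card_nsmul_le_sum (Finset.Icc 1 n) (fun k => Smeasure f Θ (θ k))
      ((Finset.Icc 1 n).inf' ⟨1, Finset.mem_Icc.mpr ⟨le_refl 1, le_trans one_le_two hn⟩⟩
        (fun k => Smeasure f Θ (θ k)))
      (fun k hk => Finset.inf'_le _ hk)
    have hcard : (Finset.Icc 1 n).card = n := by rw [Nat.card_Icc]; omega
    rw [hcard, nsmul_eq_mul] at this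
    exact this
  clear_value I
  set Z : ℝ := (m : ℝ) * A / 2 + (m : ℝ) * SΔ + (m : ℝ) * A * Real.sqrt B' with hZdef
  clear_value Z
  have hRHSeq : (n : ℝ) * ((m : ℝ) * (A * t / 2)) + ((m : ℝ) / t) * SΔ
      + ((m : ℝ) * A) * (s * Real.sqrt B') = s * Z := by
    rw [hZdef, htdef, ← hss]
    field_simp
  have hIZ : I ≤ Z / s := by
    rw [le_div_iff₀ hs0]
    have h1 : (n : ℝ) * I ≤ s * Z := by
      rw [← hRHSeq]
      exact le_trans hinf hsumS
    rw [← hss] at h1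
    nlinarith [h1, hs0]
  clear hopt key1 key2 key3 hupdate_diff hgradi_eq hblock_lip hupd_norm hsumS hinf
  clear hd2sum hDsum hDkk hDk2 hDk0 hΔIcc hflip hθ hΘne hΘcl hΘcx hlam hΛlam hΔ0 hΔsum
  clear hIdef hDkdef Dk
  -- bound Z by C₀ * V
  have hsqrtB' : Real.sqrt B' ≤ ((m : ℝ) / Lf + 1) * V := by
    have h1 : Real.sqrt B' ≤ (B' + 1) / 2 := by
      nlinarith [Real.sq_sqrt hB'0, Real.sqrt_nonneg B', sq_nonneg (Real.sqrt B' - 1)]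
    have h2 : B' ≤ 2 / Lf * ((m : ℝ) * V) := by
      rw [hB'def, hRdef, hVdef]
      have hf0 : 0 ≤ f (θ 0) - fstar := by linarith [hfstar (θ 0)]
      have : f (θ 0) - fstar + (m : ℝ) * SΔ ≤ (m : ℝ) * (f (θ 0) - fstar + 1 + SΔ) := by
        nlinarith
      exact mul_le_mul_of_nonneg_left this (by positivity)
    have h3 : (2 / Lf * ((m : ℝ) * V) + 1) / 2 ≤ ((m : ℝ) / Lf + 1) * V := by
      have hq : (2 / Lf * ((m : ℝ) * V) + 1) / 2 = (m : ℝ) / Lf * V + 1 / 2 := by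
        field_simp
      rw [hq]
      nlinarith [hV1]
    linarith
  have hZC : Z ≤ C₀ * V := by
    have e1 : (m : ℝ) * A / 2 ≤ (m : ℝ) * A / 2 * V :=
      le_mul_of_one_le_right (by positivity) hV1
    have e2 : SΔ ≤ V := by
      rw [hVdef]
      linarith [hfstar (θ 0)]
    have e2' : (m : ℝ) * SΔ ≤ (m : ℝ) * V := mul_le_mul_of_nonneg_left e2 (by positivity)
    have e3 : (m : ℝ) * A * Real.sqrt B' ≤ (m : ℝ) * A * (((m : ℝ) / Lf + 1) * V) :=
      mul_le_mul_of_nonneg_left hsqrtB' (by positivity)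
    rw [hZdef, hC₀def]
    nlinarith [e1, e2', e3]
  -- conclude
  have hlogn : Real.log 2 ≤ Real.log n := Real.log_le_log two_pos (by exact_mod_cast hn)
  have hlog2 : 0 < Real.log 2 := Real.log_pos one_lt_two
  have hV0 : 0 ≤ V := by linarith
  have hfin : C₀ * V ≤ C₀ / Real.log 2 * V * Real.log n := by
    have h2 : 1 ≤ Real.log n / Real.log 2 := (one_le_div hlog2).2 hlogn
    calc C₀ * V ≤ C₀ * V * (Real.log n / Real.log 2) :=
          le_mul_of_one_le_right (mul_nonneg hC₀.le hV0) h2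
      _ = C₀ / Real.log 2 * V * Real.log n := by ring
  calc I ≤ Z / s := hIZ
    _ ≤ C₀ * V / s := by
        apply div_le_div_of_nonneg_right hZC hs0.le
    _ ≤ C₀ / Real.log 2 * V * Real.log n / s := by
        apply div_le_div_of_nonneg_right hfin hs0.le
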